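/- arXiv:1811.04663 — 3 statements merged into one kernel-verified Lean document; each statement's English description precedes it below -/
import Mathlib

section
/- The GFDM modulation matrix A = G · (I_M ⊗ W_N), where G is the block circulant matrix built from Ψ_m = diag{g[mN],…,g[mN+N−1]}, factorizes as A = P^T U_M D̄ U_M^H P U_N, where U_M = I_N ⊗ W_M, U_N = I_M ⊗ W_N, P is the permutation matrix with p_{l,q}=1 iff q=(l mod M)N+⌊l/M⌋, and D̄ is diagonal with D̄(r,r) = Σ_{m=0}^{M−1} g[mN + ⌊r/M⌋] ω^{m(r mod M)}, ω = e^{2πi/M}. -/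
open Matrix Complex BigOperators

noncomputable section

namespace GFDM

variable {M N : ℕ}

lemma left_pos (i : Fin (M * N)) : 0 < M := by
  rcases Nat.eq_zero_or_pos M with h | h
  · subst h; exact absurd i.isLt (by simp)
  · exact h

lemma right_pos (i : Fin (M * N)) : 0 < N := by
  rcases Nat.eq_zero_or_pos N with h | h
  · subst h; exact absurd i.isLt (by simp)
  · exact h

/-- block index when splitting `Fin (M*N)` into `M` blocks of length `N` -/
def divN (i : Fin (M * N)) : Fin M :=
  ⟨(i : ℕ) / N, Nat.div_lt_of_lt_mul (Nat.lt_of_lt_of_le i.isLt (Nat.le_of_eq (Nat.mul_comm M N)))⟩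

def modN (i : Fin (M * N)) : Fin N :=
  ⟨(i : ℕ) % N, Nat.mod_lt _ (right_pos i)⟩

/-- block index when splitting `Fin (M*N)` into `N` blocks of length `M` -/
def divM (i : Fin (M * N)) : Fin N :=
  ⟨(i : ℕ) / M, Nat.div_lt_of_lt_mul i.isLt⟩

def modM (i : Fin (M * N)) : Fin M :=
  ⟨(i : ℕ) % M, Nat.mod_lt _ (left_pos i)⟩

/-- normalized `K`-point IDFT matrix, entries `(1/√K) e^{2πi jk/K}` -/
def W (K : ℕ) : Matrix (Fin K) (Fin K) ℂ :=
  fun j k => ((1 / Real.sqrt K : ℝ) : ℂ) *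
    Complex.exp (2 * Real.pi * Complex.I * ((j : ℕ) : ℂ) * ((k : ℕ) : ℂ) / (K : ℂ))

/-- the perfect-shuffle permutation matrix `P` with `p_{l,q} = 1` iff
`q = (l mod M)·N + ⌊l/M⌋` -/
def P (M N : ℕ) : Matrix (Fin (M * N)) (Fin (M * N)) ℂ :=
  fun l q => if (q : ℕ) = ((l : ℕ) % M) * N + (l : ℕ) / M then 1 else 0

lemma shuffle_lt (l : Fin (M * N)) : ((l : ℕ) % M) * N + (l : ℕ) / M < M * N := by
  have h1 : (l : ℕ) % M < M := Nat.mod_lt _ (left_pos l)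
  have h2 : (l : ℕ) / M < N := Nat.div_lt_of_lt_mul l.isLt
  calc ((l : ℕ) % M) * N + (l : ℕ) / M < ((l : ℕ) % M) * N + N := Nat.add_lt_add_left h2 _
    _ = ((l : ℕ) % M + 1) * N := by ring
    _ ≤ M * N := Nat.mul_le_mul_right _ h1

lemma shuffle'_lt (i : Fin (M * N)) : ((i : ℕ) % N) * M + (i : ℕ) / N < M * N := by
  have h1 : (i : ℕ) % N < N := Nat.mod_lt _ (right_pos i)
  have h2 : (i : ℕ) / N < M := Nat.div_lt_of_lt_mul (Nat.lt_of_lt_of_le i.isLt (Nat.le_of_eq (Nat.mul_comm M N)))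
  calc ((i : ℕ) % N) * M + (i : ℕ) / N < ((i : ℕ) % N) * M + M := Nat.add_lt_add_left h2 _
    _ = ((i : ℕ) % N + 1) * M := by ring
    _ ≤ N * M := Nat.mul_le_mul_right _ h1
    _ = M * N := Nat.mul_comm N M

/-- the index map `l ↦ (l mod M)·N + ⌊l/M⌋` underlying `P` -/
def shuffle (l : Fin (M * N)) : Fin (M * N) :=
  ⟨((l : ℕ) % M) * N + (l : ℕ) / M, shuffle_lt l⟩

/-- the index map `i ↦ (i mod N)·M + ⌊i/N⌋` underlying `Pᵀ` -/
def shuffle' (i : Fin (M * N)) : Fin (M * N) :=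
  ⟨((i : ℕ) % N) * M + (i : ℕ) / N, shuffle'_lt i⟩

/-- Kronecker product `A ⊗ B` of an `M×M` and an `N×N` matrix, flattened on
`Fin (M*N)` via `l ↔ (⌊l/N⌋, l mod N)` -/
def kron (A : Matrix (Fin M) (Fin M) ℂ) (B : Matrix (Fin N) (Fin N) ℂ) :
    Matrix (Fin (M * N)) (Fin (M * N)) ℂ :=
  fun i j => A (divN i) (divN j) * B (modN i) (modN j)

/-- Kronecker product `B ⊗ A` of an `N×N` and an `M×M` matrix, flattened on
`Fin (M*N)` via `l ↔ (⌊l/M⌋, l mod M)` -/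
def kron' (B : Matrix (Fin N) (Fin N) ℂ) (A : Matrix (Fin M) (Fin M) ℂ) :
    Matrix (Fin (M * N)) (Fin (M * N)) ℂ :=
  fun i j => B (divM i) (divM j) * A (modM i) (modM j)

/-- `U_M = I_N ⊗ W_M`, block diagonal with `N` copies of `W_M` -/
def UM (M N : ℕ) : Matrix (Fin (M * N)) (Fin (M * N)) ℂ :=
  kron' (1 : Matrix (Fin N) (Fin N) ℂ) (W M)

/-- `U_N = I_M ⊗ W_N`, block diagonal with `M` copies of `W_N` -/
def UN (M N : ℕ) : Matrix (Fin (M * N)) (Fin (M * N)) ℂ :=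
  kron (1 : Matrix (Fin M) (Fin M) ℂ) (W N)

/-- `F_b = W_M ⊗ I_N` -/
def Fb (M N : ℕ) : Matrix (Fin (M * N)) (Fin (M * N)) ℂ :=
  kron (W M) (1 : Matrix (Fin N) (Fin N) ℂ)

/-- the block circulant matrix `G` with `(i,j)`-th `N×N` block
`Ψ_{(i−j) mod M}`, `Ψ_m = diag{g[mN],…,g[mN+N−1]}` -/
def Gmat (M N : ℕ) (g : ℕ → ℂ) : Matrix (Fin (M * N)) (Fin (M * N)) ℂ :=
  fun i j =>
    if (i : ℕ) % N = (j : ℕ) % N then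
      g (((((i : ℕ) / N) + M - (j : ℕ) / N) % M) * N + (i : ℕ) % N)
    else 0

/-- block diagonal matrix whose `q`-th `N×N` block is
`D_q = Σ_{m<M} ω^{−qm} Ψ_m`, `ω = e^{2πi/M}` -/
def Dmat (M N : ℕ) (g : ℕ → ℂ) : Matrix (Fin (M * N)) (Fin (M * N)) ℂ :=
  fun i j =>
    if (i : ℕ) / N = (j : ℕ) / N then
      ∑ m ∈ Finset.range M,
        Complex.exp (-(2 * Real.pi * Complex.I * (m : ℂ) * (((i : ℕ) / N : ℕ) : ℂ)) / (M : ℂ)) *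
          (if (i : ℕ) % N = (j : ℕ) % N then g (m * N + (i : ℕ) % N) else 0)
    else 0

/-- `λ(r) = Σ_{m<M} g[mN + (r mod N)] e^{−2πi m ⌊r/N⌋ / M}` -/
def lam (M N : ℕ) (g : ℕ → ℂ) (r : ℕ) : ℂ :=
  ∑ m ∈ Finset.range M,
    g (m * N + r % N) *
      Complex.exp (-(2 * Real.pi * Complex.I * (m : ℂ) * ((r / N : ℕ) : ℂ)) / (M : ℂ))

/-- the diagonal matrix `D̄` with
`D̄(r,r) = Σ_{m<M} g[mN + ⌊r/M⌋] e^{−2πi m (r mod M)/M}` -/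
def Dbar (M N : ℕ) (g : ℕ → ℂ) : Matrix (Fin (M * N)) (Fin (M * N)) ℂ :=
  Matrix.diagonal fun r : Fin (M * N) =>
    ∑ m ∈ Finset.range M,
      g (m * N + (r : ℕ) / M) *
        Complex.exp (-(2 * Real.pi * Complex.I * (m : ℂ) * (((r : ℕ) % M : ℕ) : ℂ)) / (M : ℂ))

/-- the GFDM modulation matrix `A = G · (I_M ⊗ W_N)` -/
def Amat (M N : ℕ) (g : ℕ → ℂ) : Matrix (Fin (M * N)) (Fin (M * N)) ℂ :=
  Gmat M N g * UN M N

lemma idx_lt (m : Fin M) (k : Fin N) : (m : ℕ) * N + (k : ℕ) < M * N := by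
  calc (m : ℕ) * N + (k : ℕ) < (m : ℕ) * N + N := Nat.add_lt_add_left k.isLt _
    _ = ((m : ℕ) + 1) * N := by ring
    _ ≤ M * N := Nat.mul_le_mul_right _ m.isLt

/-- flattened data index: `(m,k) ↦ mN + k` -/
def idx (m : Fin M) (k : Fin N) : Fin (M * N) :=
  ⟨(m : ℕ) * N + (k : ℕ), idx_lt m k⟩

/-! ### Auxiliary lemmas for Theorem 1 -/

lemma sum_exp_dvd (M : ℕ) (hM : 0 < M) (c : ℤ) :
    ∑ p ∈ Finset.range M, Complex.exp (2 * Real.pi * I * c * p / M)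
      = if (M : ℤ) ∣ c then (M : ℂ) else 0 := by
  have hMC : (M : ℂ) ≠ 0 := Nat.cast_ne_zero.2 hM.ne'
  have hterm : ∀ p : ℕ, Complex.exp (2 * Real.pi * I * c * p / M)
      = Complex.exp (2 * Real.pi * I * c / M) ^ p := by
    intro p
    rw [← Complex.exp_nat_mul]
    congr 1
    field_simp
  simp only [hterm]
  by_cases hdvd : (M : ℤ) ∣ c
  · rw [if_pos hdvd]
    obtain ⟨k, hk⟩ := hdvd
    have : (2 : ℂ) * Real.pi * I * c / M = k * (2 * Real.pi * I) := by
      rw [hk]; push_cast; field_simp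
    rw [this, Complex.exp_int_mul_two_pi_mul_I]
    simp
  · have hz1 : Complex.exp (2 * Real.pi * I * c / M) ≠ 1 := by
      intro h
      obtain ⟨n, hn⟩ := Complex.exp_eq_one_iff.1 h
      apply hdvd
      have hc : (c : ℂ) = ↑M * ↑n := by
        field_simp at hn
        have h2 : (2 * (Real.pi : ℂ) * I) * (c : ℂ)
            = (2 * (Real.pi : ℂ) * I) * ((M : ℂ) * (n : ℂ)) := by linear_combination (2 * (Real.pi : ℂ) * I) * hn
        exact mul_left_cancel₀ Complex.two_pi_I_ne_zero h2
      exact ⟨n, by exact_mod_cast hc⟩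
    have hzM : Complex.exp (2 * Real.pi * I * c / M) ^ M = 1 := by
      rw [← Complex.exp_nat_mul]
      have : (M : ℂ) * (2 * Real.pi * I * c / M) = c * (2 * Real.pi * I) := by
        field_simp
      rw [this, Complex.exp_int_mul_two_pi_mul_I]
    rw [geom_sum_eq hz1, hzM]
    simp [hdvd]

lemma key_div (M : ℕ) (hM : 0 < M) (x y m : ℕ) (hx : x < M) (hy : y < M) (hm : m < M) :
    ((M : ℤ) ∣ (x : ℤ) - y - m) ↔ m = (x + M - y) % M := by
  set t : ℕ := x + M - y with ht
  have htc : (t : ℤ) = (x : ℤ) + M - y := by omega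
  have h1 : ((M : ℤ) ∣ (x : ℤ) - y - m) ↔ (M : ℤ) ∣ (t : ℤ) - m := by
    constructor
    · intro ⟨k, hk⟩; exact ⟨k + 1, by rw [mul_add]; omega⟩
    · intro ⟨k, hk⟩; exact ⟨k - 1, by rw [mul_sub]; omega⟩
  have hmm : (m : ℤ) % M = m := Int.emod_eq_of_lt (by positivity) (by exact_mod_cast hm)
  rw [h1, ← Int.modEq_iff_dvd, Int.ModEq, hmm, ← Int.natCast_mod]
  exact Int.natCast_inj

lemma conj_W (K : ℕ) (j k : Fin K) :
    (starRingEnd ℂ) (W K j k)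
      = ((1 / Real.sqrt K : ℝ) : ℂ) * Complex.exp (-(2 * Real.pi * I * ((j : ℕ) : ℂ) * ((k : ℕ) : ℂ)) / (K : ℂ)) := by
  unfold W
  rw [RingHom.map_mul, Complex.conj_ofReal, ← Complex.exp_conj]
  congr 1
  rw [map_div₀]
  simp [Complex.conj_I, Complex.conj_ofReal, map_ofNat]

/-! index arithmetic -/

lemma mkM_lt (q : Fin N) (p : Fin M) : (q : ℕ) * M + (p : ℕ) < M * N := by
  rw [mul_comm M N]
  exact idx_lt q p

/-- `(q,p) ↦ q·M + p`, the index with `divM = q`, `modM = p` -/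
def mkM (q : Fin N) (p : Fin M) : Fin (M * N) :=
  ⟨(q : ℕ) * M + (p : ℕ), mkM_lt q p⟩

lemma mkM_div (q : Fin N) (p : Fin M) : ((mkM q p : Fin (M * N)) : ℕ) / M = q := by
  show ((q : ℕ) * M + p) / M = q
  rw [mul_comm, Nat.mul_add_div p.pos, Nat.div_eq_of_lt p.isLt, Nat.add_zero]

lemma mkM_mod (q : Fin N) (p : Fin M) : ((mkM q p : Fin (M * N)) : ℕ) % M = p := by
  show ((q : ℕ) * M + p) % M = p
  rw [add_comm, Nat.add_mul_mod_self_right]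
  exact Nat.mod_eq_of_lt p.isLt

lemma divM_mkM (q : Fin N) (p : Fin M) : divM (mkM q p) = q := Fin.ext (mkM_div q p)
lemma modM_mkM (q : Fin N) (p : Fin M) : modM (mkM q p) = p := Fin.ext (mkM_mod q p)

lemma mkM_surj (s : Fin (M * N)) : mkM (divM s) (modM s) = s := by
  apply Fin.ext
  show ((s : ℕ) / M) * M + (s : ℕ) % M = s
  rw [mul_comm]
  exact Nat.div_add_mod _ _

/-- the equivalence `Fin N × Fin M ≃ Fin (M*N)` via `(q,p) ↦ qM + p` -/
def splitM : Fin N × Fin M ≃ Fin (M * N) where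
  toFun x := mkM x.1 x.2
  invFun s := (divM s, modM s)
  left_inv x := by simp [divM_mkM, modM_mkM]
  right_inv s := mkM_surj s

lemma shuffle'_shuffle (l : Fin (M * N)) : shuffle' (shuffle l) = l := by
  have h2 : (l : ℕ) / M < N := Nat.div_lt_of_lt_mul l.isLt
  have hN : 0 < N := right_pos l
  apply Fin.ext
  show (((l : ℕ) % M * N + (l : ℕ) / M) % N) * M + ((l : ℕ) % M * N + (l : ℕ) / M) / N = l
  have e1 : ((l : ℕ) % M * N + (l : ℕ) / M) % N = (l : ℕ) / M := by
    rw [add_comm, Nat.add_mul_mod_self_right]; exact Nat.mod_eq_of_lt h2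
  have e2 : ((l : ℕ) % M * N + (l : ℕ) / M) / N = (l : ℕ) % M := by
    rw [mul_comm, Nat.mul_add_div hN, Nat.div_eq_of_lt h2, Nat.add_zero]
  rw [e1, e2, mul_comm]
  exact Nat.div_add_mod _ _

lemma shuffle_shuffle' (i : Fin (M * N)) : shuffle (shuffle' i) = i := by
  have h2 : (i : ℕ) / N < M :=
    Nat.div_lt_of_lt_mul (Nat.lt_of_lt_of_le i.isLt (Nat.le_of_eq (Nat.mul_comm M N)))
  have hM : 0 < M := left_pos i
  apply Fin.ext
  show (((i : ℕ) % N * M + (i : ℕ) / N) % M) * N + ((i : ℕ) % N * M + (i : ℕ) / N) / M = i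
  have e1 : ((i : ℕ) % N * M + (i : ℕ) / N) % M = (i : ℕ) / N := by
    rw [add_comm, Nat.add_mul_mod_self_right]; exact Nat.mod_eq_of_lt h2
  have e2 : ((i : ℕ) % N * M + (i : ℕ) / N) / M = (i : ℕ) % N := by
    rw [mul_comm, Nat.mul_add_div hM, Nat.div_eq_of_lt h2, Nat.add_zero]
  rw [e1, e2, mul_comm]
  exact Nat.div_add_mod _ _

/-- conjugating by the permutation matrix `P` shuffles indices -/
lemma perm_conj (X : Matrix (Fin (M * N)) (Fin (M * N)) ℂ) (i j : Fin (M * N)) :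
    ((P M N)ᵀ * X * P M N) i j = X (shuffle' i) (shuffle' j) := by
  rw [Matrix.mul_apply]
  rw [Finset.sum_eq_single (shuffle' j)]
  · rw [Matrix.mul_apply, Finset.sum_eq_single (shuffle' i)]
    · have h1 : (P M N) (shuffle' i) i = 1 := by
        unfold P
        rw [if_pos]
        exact congrArg Fin.val (shuffle_shuffle' i).symm
      have h2 : (P M N) (shuffle' j) j = 1 := by
        unfold P
        rw [if_pos]
        exact congrArg Fin.val (shuffle_shuffle' j).symm
      rw [Matrix.transpose_apply, h1, h2, one_mul, mul_one]
    · intro l _ hl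
      have : (P M N) l i = 0 := by
        unfold P
        rw [if_neg]
        intro hc
        apply hl
        have : i = shuffle l := Fin.ext hc
        rw [this, shuffle'_shuffle]
      rw [Matrix.transpose_apply, this, zero_mul]
    · intro h; exact absurd (Finset.mem_univ _) h
  · intro q _ hq
    have : (P M N) q j = 0 := by
      unfold P
      rw [if_neg]
      intro hc
      apply hq
      have : j = shuffle q := Fin.ext hc
      rw [this, shuffle'_shuffle]
    rw [this, mul_zero]
  · intro h; exact absurd (Finset.mem_univ _) h

lemma shuffle'_div (i : Fin (M * N)) : ((shuffle' i : Fin (M * N)) : ℕ) / M = (i : ℕ) % N := by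
  have h2 : (i : ℕ) / N < M :=
    Nat.div_lt_of_lt_mul (Nat.lt_of_lt_of_le i.isLt (Nat.le_of_eq (Nat.mul_comm M N)))
  show ((i : ℕ) % N * M + (i : ℕ) / N) / M = (i : ℕ) % N
  rw [mul_comm, Nat.mul_add_div (left_pos i), Nat.div_eq_of_lt h2, Nat.add_zero]

lemma shuffle'_mod (i : Fin (M * N)) : ((shuffle' i : Fin (M * N)) : ℕ) % M = (i : ℕ) / N := by
  have h2 : (i : ℕ) / N < M :=
    Nat.div_lt_of_lt_mul (Nat.lt_of_lt_of_le i.isLt (Nat.le_of_eq (Nat.mul_comm M N)))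
  show ((i : ℕ) % N * M + (i : ℕ) / N) % M = (i : ℕ) / N
  rw [add_comm, Nat.add_mul_mod_self_right]; exact Nat.mod_eq_of_lt h2

lemma divM_val (s : Fin (M * N)) : ((divM s : Fin N) : ℕ) = (s : ℕ) / M := rfl
lemma modM_val (s : Fin (M * N)) : ((modM s : Fin M) : ℕ) = (s : ℕ) % M := rfl

lemma mid (M N : ℕ) (hM : 0 < M) (hN : 0 < N) (g : ℕ → ℂ) (a b : Fin (M * N)) :
    (UM M N * Dbar M N g * (UM M N)ᴴ) a b
      = if (a : ℕ) / M = (b : ℕ) / M then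
          g ((((a : ℕ) % M + M - (b : ℕ) % M) % M) * N + (a : ℕ) / M)
        else 0 := by
  classical
  have hMC : (M : ℂ) ≠ 0 := Nat.cast_ne_zero.2 hM.ne'
  set x : Fin M := modM a with hxdef
  set y : Fin M := modM b with hydef
  have expand : ∀ s : Fin (M * N),
      (UM M N * Dbar M N g) a s * (UM M N)ᴴ s b
        = if divM a = divM s ∧ divM b = divM s then
            W M x (modM s) *
              (∑ m ∈ Finset.range M,
                g (m * N + (s : ℕ) / M) *
                  Complex.exp (-(2 * Real.pi * I * (m : ℂ) * (((s : ℕ) % M : ℕ) : ℂ)) / (M : ℂ))) *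
              star (W M y (modM s))
          else 0 := by
    intro s
    rw [Dbar, Matrix.mul_diagonal, Matrix.conjTranspose_apply]
    show ((1 : Matrix (Fin N) (Fin N) ℂ) (divM a) (divM s) * W M x (modM s)) * _ *
        star ((1 : Matrix (Fin N) (Fin N) ℂ) (divM b) (divM s) * W M y (modM s)) = _
    by_cases h1 : divM a = divM s <;> by_cases h2 : divM b = divM s <;>
      simp [Matrix.one_apply, h1, h2, star_mul']
  rw [Matrix.mul_apply]
  simp only [expand]
  rw [← Equiv.sum_comp (splitM (M := M) (N := N))]
  rw [Fintype.sum_prod_type]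
  have hsplit : ∀ (q : Fin N) (p : Fin M), splitM (q, p) = mkM q p := fun _ _ => rfl
  simp only [hsplit, divM_mkM, modM_mkM, mkM_div, mkM_mod]
  by_cases hab : (a : ℕ) / M = (b : ℕ) / M
  · rw [if_pos hab]
    have habF : divM a = divM b := Fin.ext hab
    have hcond : ∀ q : Fin N, (divM a = q ∧ divM b = q) = (divM a = q) := by
      intro q; rw [← habF]; simp
    simp only [hcond]
    have hpush : ∀ q : Fin N,
        (∑ p : Fin M, if divM a = q then
          W M x p * (∑ m ∈ Finset.range M,
            g (m * N + (q : ℕ)) *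
              Complex.exp (-(2 * Real.pi * I * (m : ℂ) * ((p : ℕ) : ℂ)) / (M : ℂ))) *
            star (W M y p) else 0)
        = if divM a = q then
            (∑ p : Fin M, W M x p * (∑ m ∈ Finset.range M,
              g (m * N + (q : ℕ)) *
                Complex.exp (-(2 * Real.pi * I * (m : ℂ) * ((p : ℕ) : ℂ)) / (M : ℂ))) *
              star (W M y p)) else 0 := by
      intro q; split <;> simp
    simp only [hpush]
    rw [Finset.sum_ite_eq Finset.univ (divM a)]
    rw [if_pos (Finset.mem_univ _)]
    -- now the analytic core
    set q : ℕ := ((divM a : Fin N) : ℕ) with hq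
    have hq' : q = (a : ℕ) / M := rfl
    set m₀ : ℕ := ((x : ℕ) + M - (y : ℕ)) % M with hm₀
    have hm₀lt : m₀ < M := Nat.mod_lt _ hM
    have hstarW : ∀ p : Fin M, star (W M y p)
        = ((1 / Real.sqrt M : ℝ) : ℂ) *
            Complex.exp (-(2 * Real.pi * I * ((y : ℕ) : ℂ) * ((p : ℕ) : ℂ)) / (M : ℂ)) :=
      fun p => conj_W M y p
    have step1 : ∀ p : Fin M,
        W M x p * (∑ m ∈ Finset.range M,
          g (m * N + q) * Complex.exp (-(2 * Real.pi * I * (m : ℂ) * ((p : ℕ) : ℂ)) / (M : ℂ))) *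
          star (W M y p)
        = ∑ m ∈ Finset.range M,
            g (m * N + q) *
              ((M : ℂ)⁻¹ *
                Complex.exp (2 * Real.pi * I * (((x : ℕ) : ℤ) - ((y : ℕ) : ℤ) - (m : ℤ) : ℤ) * ((p : ℕ) : ℂ) / (M : ℂ))) := by
      intro p
      rw [hstarW p, Finset.mul_sum, Finset.sum_mul]
      refine Finset.sum_congr rfl fun m _ => ?_
      show ((1 / Real.sqrt M : ℝ) : ℂ) *
          Complex.exp (2 * Real.pi * I * ((x : ℕ) : ℂ) * ((p : ℕ) : ℂ) / (M : ℂ)) *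
          (g (m * N + q) * Complex.exp (-(2 * Real.pi * I * (m : ℂ) * ((p : ℕ) : ℂ)) / (M : ℂ))) *
          (((1 / Real.sqrt M : ℝ) : ℂ) *
            Complex.exp (-(2 * Real.pi * I * ((y : ℕ) : ℂ) * ((p : ℕ) : ℂ)) / (M : ℂ))) = _
      have hsq : ((1 / Real.sqrt M : ℝ) : ℂ) * ((1 / Real.sqrt M : ℝ) : ℂ) = (M : ℂ)⁻¹ := by
        rw [← Complex.ofReal_mul]
        rw [show (1 / Real.sqrt M) * (1 / Real.sqrt M) = 1 / (Real.sqrt M * Real.sqrt M) by ring]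
        rw [Real.mul_self_sqrt (Nat.cast_nonneg M)]
        push_cast
        rw [one_div]
      have hexp : Complex.exp (2 * Real.pi * I * ((x : ℕ) : ℂ) * ((p : ℕ) : ℂ) / (M : ℂ)) *
          Complex.exp (-(2 * Real.pi * I * (m : ℂ) * ((p : ℕ) : ℂ)) / (M : ℂ)) *
          Complex.exp (-(2 * Real.pi * I * ((y : ℕ) : ℂ) * ((p : ℕ) : ℂ)) / (M : ℂ))
          = Complex.exp (2 * Real.pi * I * (((x : ℕ) : ℤ) - ((y : ℕ) : ℤ) - (m : ℤ) : ℤ) * ((p : ℕ) : ℂ) / (M : ℂ)) := by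
        rw [← Complex.exp_add, ← Complex.exp_add]
        congr 1
        push_cast
        ring
      calc ((1 / Real.sqrt M : ℝ) : ℂ) *
          Complex.exp (2 * Real.pi * I * ((x : ℕ) : ℂ) * ((p : ℕ) : ℂ) / (M : ℂ)) *
          (g (m * N + q) * Complex.exp (-(2 * Real.pi * I * (m : ℂ) * ((p : ℕ) : ℂ)) / (M : ℂ))) *
          (((1 / Real.sqrt M : ℝ) : ℂ) *
            Complex.exp (-(2 * Real.pi * I * ((y : ℕ) : ℂ) * ((p : ℕ) : ℂ)) / (M : ℂ)))
          = g (m * N + q) * (((1 / Real.sqrt M : ℝ) : ℂ) * ((1 / Real.sqrt M : ℝ) : ℂ)) *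
            (Complex.exp (2 * Real.pi * I * ((x : ℕ) : ℂ) * ((p : ℕ) : ℂ) / (M : ℂ)) *
              Complex.exp (-(2 * Real.pi * I * (m : ℂ) * ((p : ℕ) : ℂ)) / (M : ℂ)) *
              Complex.exp (-(2 * Real.pi * I * ((y : ℕ) : ℂ) * ((p : ℕ) : ℂ)) / (M : ℂ))) := by ring
        _ = _ := by rw [hsq, hexp]; ring
    simp only [step1]
    rw [Finset.sum_comm]
    have step2 : ∀ m ∈ Finset.range M,
        (∑ p : Fin M, g (m * N + q) *
          ((M : ℂ)⁻¹ *
            Complex.exp (2 * Real.pi * I * (((x : ℕ) : ℤ) - ((y : ℕ) : ℤ) - (m : ℤ) : ℤ) * ((p : ℕ) : ℂ) / (M : ℂ))))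
        = if m = m₀ then g (m * N + q) else 0 := by
      intro m hm
      rw [← Finset.mul_sum, ← Finset.mul_sum]
      rw [Fin.sum_univ_eq_sum_range (fun p : ℕ =>
        Complex.exp (2 * Real.pi * I * (((x : ℕ) : ℤ) - ((y : ℕ) : ℤ) - (m : ℤ) : ℤ) * (p : ℂ) / (M : ℂ)))]
      rw [sum_exp_dvd M hM _]
      by_cases hd : (M : ℤ) ∣ ((x : ℕ) : ℤ) - ((y : ℕ) : ℤ) - (m : ℤ)
      · rw [if_pos hd, if_pos ((key_div M hM x y m x.isLt y.isLt (Finset.mem_range.1 hm)).1 hd)]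
        rw [inv_mul_cancel₀ hMC, mul_one]
      · rw [if_neg hd,
          if_neg (fun h => hd ((key_div M hM x y m x.isLt y.isLt (Finset.mem_range.1 hm)).2 h))]
        rw [mul_zero, mul_zero]
    rw [Finset.sum_congr rfl step2]
    rw [Finset.sum_ite_eq' (Finset.range M) m₀]
    rw [if_pos (Finset.mem_range.2 hm₀lt)]
    rfl
  · rw [if_neg hab]
    have habF : divM a ≠ divM b := fun h => hab (congrArg Fin.val h)
    have : ∀ q : Fin N, ¬(divM a = q ∧ divM b = q) := by
      rintro q ⟨h1, h2⟩; exact habF (h1.trans h2.symm)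
    simp [this]

lemma Gfact (M N : ℕ) (hM : 0 < M) (hN : 0 < N) (g : ℕ → ℂ) :
    Gmat M N g = (P M N)ᵀ * UM M N * Dbar M N g * (UM M N)ᴴ * P M N := by
  ext i j
  have hrw : ((P M N)ᵀ * UM M N * Dbar M N g * (UM M N)ᴴ * P M N)
      = ((P M N)ᵀ * (UM M N * Dbar M N g * (UM M N)ᴴ) * P M N) := by
    simp only [Matrix.mul_assoc]
  rw [hrw, perm_conj, mid M N hM hN g]
  rw [shuffle'_div i, shuffle'_div j, shuffle'_mod i, shuffle'_mod j]
  rfl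

/-- Theorem 1: `A = Pᵀ U_M D̄ U_Mᴴ P U_N` with
`D̄(r,r) = Σ_{m<M} g[mN + ⌊r/M⌋] e^{−2πi m (r mod M)/M}`. -/
theorem stmt7 (M N : ℕ) (hM : 0 < M) (hN : 0 < N) (g : ℕ → ℂ) :
    Amat M N g = (P M N)ᵀ * UM M N * Dbar M N g * (UM M N)ᴴ * P M N * UN M N := by
  rw [Amat, Gfact M N hM hN g]

end GFDM
end
end

section
/- Let A be the GFDM modulation matrix with columns A_{m,k} = T_m M_k g, where (M_k g)[n] = g[n] e^{2πi nk/N} and (T_m g)[n] = g[(n − mN) mod MN]. Then A equals G · (I_M ⊗ W_N) up to the normalization 1/√N, i.e., the GFDM transmit signal x[n] = (1/√N) Σ_{m=0}^{M−1} Σ_{k=0}^{N−1} d_{m,k} g[(n−mN) mod MN] e^{2πi nk/N} can be written as x = G (I_M ⊗ W_N) d, with G the block circulant matrix with (i,j)-block Ψ_{(i−j) mod M}, Ψ_m = diag{g[mN],…,g[mN+N−1]}. -/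
open Matrix Complex BigOperators

noncomputable section

namespace GFDM

variable {M N : ℕ}

lemma idx_div (hN : 0 < N) (m : Fin M) (k : Fin N) : ((m : ℕ) * N + (k : ℕ)) / N = m := by
  have h : (m : ℕ) * N + (k : ℕ) = N * m + k := by ring
  rw [h, Nat.mul_add_div hN, Nat.div_eq_of_lt k.isLt, add_zero]

lemma idx_mod (m : Fin M) (k : Fin N) : ((m : ℕ) * N + (k : ℕ)) % N = k := by
  have h : (m : ℕ) * N + (k : ℕ) = N * m + k := by ring
  rw [h, Nat.mul_add_mod, Nat.mod_eq_of_lt k.isLt]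

lemma mul_add_mod_mul (hM : 0 < M) (hN : 0 < N) (a r : ℕ) (hr : r < N) :
    (a * N + r) % (M * N) = (a % M) * N + r := by
  have h1 : a * N + r = (a % M) * N + r + (a / M) * (M * N) := by
    conv_lhs => rw [← Nat.mod_add_div a M]
    ring
  rw [h1, Nat.add_mul_mod_self_right, Nat.mod_eq_of_lt]
  have h2 : a % M < M := Nat.mod_lt _ hM
  calc (a % M) * N + r < (a % M) * N + N := Nat.add_lt_add_left hr _
    _ = (a % M + 1) * N := by ring
    _ ≤ M * N := Nat.mul_le_mul_right _ h2

lemma mod_shift (hM : 0 < M) (hN : 0 < N) (n m : ℕ) (hm : m < M) :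
    (n + M * N - m * N) % (M * N) = ((n / N + M - m) % M) * N + n % N := by
  have hmM : m ≤ M := le_of_lt hm
  have h3 : m * N ≤ M * N := Nat.mul_le_mul_right N hmM
  have h4 : N * (n / N) + n % N = n := Nat.div_add_mod n N
  have key : n + M * N - m * N = (n / N + (M - m)) * N + n % N := by
    calc n + M * N - m * N = N * (n / N) + n % N + M * N - m * N := by rw [h4]
      _ = N * (n / N) + n % N + (M * N - m * N) := by omega
      _ = N * (n / N) + n % N + (M - m) * N := by rw [Nat.sub_mul]
      _ = (n / N + (M - m)) * N + n % N := by ring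
  rw [key, mul_add_mod_mul hM hN _ _ (Nat.mod_lt _ hN), Nat.add_sub_assoc hmM]

lemma exp_mod (hN : 0 < N) (n k : ℕ) :
    Complex.exp (2 * Real.pi * Complex.I * (n : ℂ) * (k : ℂ) / (N : ℂ)) =
    Complex.exp (2 * Real.pi * Complex.I * ((n % N : ℕ) : ℂ) * (k : ℂ) / (N : ℂ)) := by
  have hNC : (N : ℂ) ≠ 0 := Nat.cast_ne_zero.mpr hN.ne'
  obtain ⟨q, hq⟩ : ∃ q, q = n / N := ⟨_, rfl⟩
  have h4 : (N : ℂ) * (q : ℂ) + ((n % N : ℕ) : ℂ) = (n : ℂ) := by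
    exact_mod_cast congrArg (Nat.cast : ℕ → ℂ) (hq ▸ Nat.div_add_mod n N)
  have : 2 * Real.pi * Complex.I * (n : ℂ) * (k : ℂ) / (N : ℂ) =
      2 * Real.pi * Complex.I * ((n % N : ℕ) : ℂ) * (k : ℂ) / (N : ℂ) +
      ((q * k : ℕ) : ℤ) * (2 * Real.pi * Complex.I) := by
    rw [← h4]; push_cast; field_simp; ring
  rw [this, Complex.exp_add, Complex.exp_int_mul_two_pi_mul_I, mul_one]


lemma sum_collapse (hM : 0 < M) (hN : 0 < N) (g : ℕ → ℂ) (n' : Fin (M * N))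
    (m : Fin M) (k : Fin N) :
    (∑ l : Fin (M * N), Gmat M N g n' l * UN M N l (idx m k)) =
      g ((((n' : ℕ) / N + M - (m : ℕ)) % M) * N + (n' : ℕ) % N) *
        (((1 / Real.sqrt N : ℝ) : ℂ) *
          Complex.exp (2 * Real.pi * Complex.I * (((n' : ℕ) % N : ℕ) : ℂ) * ((k : ℕ) : ℂ) / (N : ℂ))) := by
  have hl0 := idx_lt (M := M) m (⟨(n' : ℕ) % N, Nat.mod_lt _ hN⟩ : Fin N)
  set l0 : Fin (M * N) := ⟨(m : ℕ) * N + (n' : ℕ) % N, hl0⟩ with hl0def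
  rw [Finset.sum_eq_single l0]
  · have h1 : ((l0 : ℕ)) % N = (n' : ℕ) % N := by
      exact idx_mod m (⟨(n' : ℕ) % N, Nat.mod_lt _ hN⟩ : Fin N)
    have h2 : ((l0 : ℕ)) / N = (m : ℕ) := by
      simpa using idx_div hN m (⟨(n' : ℕ) % N, Nat.mod_lt _ hN⟩ : Fin N)
    have h3 : divN l0 = divN (idx m k) := by
      apply Fin.ext
      show (l0 : ℕ) / N = ((idx m k : Fin (M*N)) : ℕ) / N
      rw [h2]; exact (idx_div hN m k).symm
    have h4 : (modN l0 : ℕ) = (n' : ℕ) % N := h1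
    have h5 : (modN (idx m k) : ℕ) = (k : ℕ) := idx_mod m k
    rw [Gmat, UN, kron, if_pos h1.symm, h3, Matrix.one_apply_eq, one_mul, W, h2, h4, h5]
  · intro l _ hl
    by_cases hmod : (n' : ℕ) % N = (l : ℕ) % N
    · by_cases hdiv : divN l = divN (idx m k)
      · exfalso
        apply hl
        apply Fin.ext
        have hdiv' : (l : ℕ) / N = (m : ℕ) := by
          have := congrArg (Fin.val) hdiv
          simpa [divN, idx, idx_div hN m k] using this
        have hdm := Nat.div_add_mod (l : ℕ) N
        show (l : ℕ) = (m : ℕ) * N + (n' : ℕ) % N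
        rw [← hdm, hdiv', ← hmod]; ring
      · rw [UN, kron, Matrix.one_apply_ne hdiv, zero_mul, mul_zero]
    · rw [Gmat, if_neg hmod, zero_mul]
  · intro h; exact absurd (Finset.mem_univ l0) h

/-- the GFDM transmit signal
`x[n] = (1/√N) Σ_m Σ_k d_{m,k} g[(n−mN) mod MN] e^{2πi nk/N}`
equals `(G (I_M ⊗ W_N) d)[n]`. -/
theorem stmt15 (M N : ℕ) (hM : 0 < M) (hN : 0 < N) (g : ℕ → ℂ)
    (d : Fin (M * N) → ℂ) (n' : Fin (M * N)) :
    ((1 / Real.sqrt (N : ℝ) : ℝ) : ℂ) *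
        ∑ m : Fin M, ∑ k : Fin N,
          d (idx m k) * g (((n' : ℕ) + M * N - (m : ℕ) * N) % (M * N)) *
            Complex.exp (2 * Real.pi * Complex.I * ((n' : ℕ) : ℂ) * ((k : ℕ) : ℂ) / (N : ℂ)) =
      ((Gmat M N g * UN M N) *ᵥ d) n' := by
  have hRHS : ((Gmat M N g * UN M N) *ᵥ d) n' =
      ∑ j : Fin (M * N), (∑ l : Fin (M * N), Gmat M N g n' l * UN M N l j) * d j := by
    simp [Matrix.mulVec, Matrix.mul_apply, dotProduct]
  rw [hRHS]
  have hequiv : ∀ F : Fin (M * N) → ℂ,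
      (∑ j : Fin (M * N), F j) = ∑ m : Fin M, ∑ k : Fin N, F (idx m k) := by
    intro F
    rw [← Equiv.sum_comp (finProdFinEquiv : Fin M × Fin N ≃ Fin (M * N)) F,
      Fintype.sum_prod_type]
    apply Finset.sum_congr rfl; intro m _
    apply Finset.sum_congr rfl; intro k _
    congr 1
    apply Fin.ext
    rw [finProdFinEquiv_apply_val]
    show ((k : ℕ) + N * (m : ℕ)) = (m : ℕ) * N + (k : ℕ)
    ring
  rw [hequiv, Finset.mul_sum]
  apply Finset.sum_congr rfl; intro m _
  rw [Finset.mul_sum]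
  apply Finset.sum_congr rfl; intro k _
  rw [sum_collapse hM hN g n' m k, mod_shift hM hN (n' : ℕ) (m : ℕ) m.isLt,
    exp_mod hN (n' : ℕ) (k : ℕ)]
  ring


end GFDM
end
end

section
/- Suppose ρ > 0 and D̄ is diagonal with entries d̄_r. Define the biased MMSE output map E = Γ_2^H [ρI + |D̄|²]^{-1} D̄^H Γ_1^H applied to y = Γ_1 D̄ Γ_2 d + ν. Then E[Γ_1 D̄ Γ_2 d] = Γ_2^H Δ Γ_2 d with Δ = diag{|d̄_r|²/(|d̄_r|²+ρ)}; in particular, if Γ_2 = U_M^H P U_N with U_M, U_N built from normalized DFT matrices, the expected scaling of each data symbol (the diagonal of Γ_2^H Δ Γ_2) equals (1/(MN)) Σ_r |d̄_r|²/(|d̄_r|²+ρ), independent of the symbol index. -/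
open Matrix Complex BigOperators

noncomputable section

namespace GFDM

variable {M N : ℕ}

/-! ### Auxiliary lemmas for stmt19 -/

lemma Wconj_mul (K : ℕ) (hK : 0 < K) (a b : Fin K) :
    (starRingEnd ℂ) (W K a b) * W K a b = ((K : ℂ))⁻¹ := by
  unfold W
  rw [_root_.map_mul, ← Complex.exp_conj]
  have hz : (starRingEnd ℂ) (2 * Real.pi * Complex.I * ((a : ℕ) : ℂ) * ((b : ℕ) : ℂ) / (K : ℂ))
      = -(2 * Real.pi * Complex.I * ((a : ℕ) : ℂ) * ((b : ℕ) : ℂ) / (K : ℂ)) := by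
    simp [map_div₀, Complex.conj_I, Complex.conj_natCast, Complex.conj_ofReal]
    rw [show (starRingEnd ℂ) 2 = 2 from Complex.conj_ofNat 2]
    ring
  rw [hz, Complex.conj_ofReal]
  have hexp : Complex.exp (-(2 * Real.pi * Complex.I * ((a : ℕ) : ℂ) * ((b : ℕ) : ℂ) / (K : ℂ))) *
      Complex.exp (2 * Real.pi * Complex.I * ((a : ℕ) : ℂ) * ((b : ℕ) : ℂ) / (K : ℂ)) = 1 := by
    rw [← Complex.exp_add]; simp
  have hs : ((1 / Real.sqrt K : ℝ) : ℂ) * ((1 / Real.sqrt K : ℝ) : ℂ) = ((K : ℂ))⁻¹ := by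
    rw [← Complex.ofReal_mul]
    have : (1 / Real.sqrt K : ℝ) * (1 / Real.sqrt K) = (K : ℝ)⁻¹ := by
      rw [div_mul_div_comm, one_mul, Real.mul_self_sqrt (Nat.cast_nonneg K), one_div]
    rw [this, Complex.ofReal_inv, Complex.ofReal_natCast]
  calc ((1 / Real.sqrt K : ℝ) : ℂ) * Complex.exp (-(2 * Real.pi * Complex.I * ((a : ℕ) : ℂ) * ((b : ℕ) : ℂ) / (K : ℂ))) *
        (((1 / Real.sqrt K : ℝ) : ℂ) * Complex.exp (2 * Real.pi * Complex.I * ((a : ℕ) : ℂ) * ((b : ℕ) : ℂ) / (K : ℂ)))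
      = (((1 / Real.sqrt K : ℝ) : ℂ) * ((1 / Real.sqrt K : ℝ) : ℂ)) *
        (Complex.exp (-(2 * Real.pi * Complex.I * ((a : ℕ) : ℂ) * ((b : ℕ) : ℂ) / (K : ℂ))) *
         Complex.exp (2 * Real.pi * Complex.I * ((a : ℕ) : ℂ) * ((b : ℕ) : ℂ) / (K : ℂ))) := by ring
    _ = ((K : ℂ))⁻¹ := by rw [hexp, hs, mul_one]

lemma P_apply_eq (l q : Fin (M * N)) : P M N l q = if q = shuffle l then 1 else 0 := by
  simp [P, shuffle, Fin.ext_iff]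

lemma P_mul_UN (l i : Fin (M * N)) : (P M N * UN M N) l i = UN M N (shuffle l) i := by
  rw [Matrix.mul_apply]
  simp [P_apply_eq, ite_mul]

lemma l0_lt (r i : Fin (M * N)) : M * ((r : ℕ) / M) + (i : ℕ) / N < M * N := by
  have h1 : (r : ℕ) / M < N := Nat.div_lt_of_lt_mul r.isLt
  have h2 : (i : ℕ) / N < M :=
    Nat.div_lt_of_lt_mul (Nat.lt_of_lt_of_le i.isLt (Nat.le_of_eq (Nat.mul_comm M N)))
  calc M * ((r : ℕ) / M) + (i : ℕ) / N < M * ((r : ℕ) / M) + M := Nat.add_lt_add_left h2 _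
    _ = M * ((r : ℕ) / M + 1) := by ring
    _ ≤ M * N := Nat.mul_le_mul_left _ h1

lemma gamma2_apply (r i : Fin (M * N)) :
    ((UM M N)ᴴ * P M N * UN M N) r i =
      (starRingEnd ℂ) (W M (divN i) (modM r)) * W N (divM r) (modN i) := by
  have hM : 0 < M := left_pos r
  have hN : 0 < N := right_pos r
  have hiN : (i : ℕ) / N < M :=
    Nat.div_lt_of_lt_mul (Nat.lt_of_lt_of_le i.isLt (Nat.le_of_eq (Nat.mul_comm M N)))
  have hrM : (r : ℕ) / M < N := Nat.div_lt_of_lt_mul r.isLt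
  set l0 : Fin (M * N) := ⟨M * ((r : ℕ) / M) + (i : ℕ) / N, l0_lt r i⟩ with hl0
  have hl0M : (l0 : ℕ) % M = (i : ℕ) / N := by
    simp [hl0, Nat.mul_add_mod, Nat.mod_eq_of_lt hiN]
  have hl0d : (l0 : ℕ) / M = (r : ℕ) / M := by
    simp [hl0, Nat.mul_add_div hM, Nat.div_eq_of_lt hiN]
  have hsh : ∀ l : Fin (M * N), ((shuffle l : Fin (M*N)) : ℕ) / N = (l : ℕ) % M := by
    intro l
    have hlM : (l : ℕ) / M < N := Nat.div_lt_of_lt_mul l.isLt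
    simp [shuffle, Nat.mul_comm _ N, Nat.mul_add_div hN, Nat.div_eq_of_lt hlM]
  have hshm : ∀ l : Fin (M * N), ((shuffle l : Fin (M*N)) : ℕ) % N = (l : ℕ) / M := by
    intro l
    have hlM : (l : ℕ) / M < N := Nat.div_lt_of_lt_mul l.isLt
    simp [shuffle, Nat.mul_comm _ N, Nat.mul_add_mod, Nat.mod_eq_of_lt hlM]
  have hterm : ∀ l : Fin (M * N),
      (UM M N)ᴴ r l * (P M N * UN M N) l i =
        (if divM l = divM r then (starRingEnd ℂ) (W M (modM l) (modM r)) else 0) *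
        (if divN (shuffle l) = divN i then W N (modN (shuffle l)) (modN i) else 0) := by
    intro l
    rw [P_mul_UN, Matrix.conjTranspose_apply]
    unfold UM UN kron kron'
    rw [Matrix.one_apply, Matrix.one_apply]
    by_cases h1 : divM l = divM r <;> by_cases h2 : divN (shuffle l) = divN i <;>
      simp [h1, h2]
  rw [Matrix.mul_assoc, Matrix.mul_apply]
  rw [Finset.sum_congr rfl (fun l _ => hterm l)]
  rw [Finset.sum_eq_single l0]
  · have h1 : divM l0 = divM r := by
      apply Fin.ext; simpa [divM] using hl0d
    have h2 : divN (shuffle l0) = divN i := by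
      apply Fin.ext
      show ((shuffle l0 : Fin (M*N)) : ℕ) / N = (i : ℕ) / N
      rw [hsh l0, hl0M]
    have h3 : modM l0 = divN i := by
      apply Fin.ext; simpa [modM, divN] using hl0M
    have h4 : modN (shuffle l0) = divM r := by
      apply Fin.ext
      show ((shuffle l0 : Fin (M*N)) : ℕ) % N = (r : ℕ) / M
      rw [hshm l0, hl0d]
    rw [if_pos h1, if_pos h2, h3, h4]
  · intro l _ hne
    by_cases h1 : divM l = divM r
    · by_cases h2 : divN (shuffle l) = divN i
      · exfalso
        apply hne
        apply Fin.ext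
        have e1 : (l : ℕ) / M = (r : ℕ) / M := by
          have := congrArg Fin.val h1; simpa [divM] using this
        have e2 : (l : ℕ) % M = (i : ℕ) / N := by
          have := congrArg Fin.val h2
          simp only [divN] at this
          rw [← hsh l]; exact this
        show (l : ℕ) = M * ((r : ℕ) / M) + (i : ℕ) / N
        rw [← e1, ← e2, Nat.div_add_mod]
      · rw [if_neg h2, mul_zero]
    · rw [if_neg h1, zero_mul]
  · intro h; exact absurd (Finset.mem_univ l0) h

lemma gamma2_conj_mul (r i : Fin (M * N)) :
    (starRingEnd ℂ) (((UM M N)ᴴ * P M N * UN M N) r i) * ((UM M N)ᴴ * P M N * UN M N) r i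
      = (((M * N : ℕ) : ℂ))⁻¹ := by
  have hM : 0 < M := left_pos r
  have hN : 0 < N := right_pos r
  rw [gamma2_apply r i]
  have h1 := Wconj_mul M hM (divN i) (modM r)
  have h2 := Wconj_mul N hN (divM r) (modN i)
  set a := W M (divN i) (modM r)
  set b := W N (divM r) (modN i)
  have : (starRingEnd ℂ) ((starRingEnd ℂ) a * b) * ((starRingEnd ℂ) a * b)
      = ((starRingEnd ℂ) a * a) * ((starRingEnd ℂ) b * b) := by
    rw [_root_.map_mul, Complex.conj_conj]; ring
  rw [this, h1, h2]
  push_cast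
  rw [mul_inv]


/-- the biased MMSE output map applied to the signal part gives
`Γ₂ᴴ Δ Γ₂ d` with `Δ = diag{|d̄_r|²/(|d̄_r|²+ρ)}`, and for the GFDM
`Γ₂ = U_Mᴴ P U_N` the diagonal of `Γ₂ᴴ Δ Γ₂` is the constant
`(1/(MN)) Σ_r |d̄_r|²/(|d̄_r|²+ρ)`. -/
theorem stmt19 (M N : ℕ) (hM : 0 < M) (hN : 0 < N) (ρ : ℝ) (hρ : 0 < ρ)
    (db : Fin (M * N) → ℂ) (Γ₁ : Matrix (Fin (M * N)) (Fin (M * N)) ℂ)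
    (hΓ₁ : Γ₁ ∈ Matrix.unitaryGroup (Fin (M * N)) ℂ) :
    ((((UM M N)ᴴ * P M N * UN M N)ᴴ *
        ((ρ : ℂ) • (1 : Matrix (Fin (M * N)) (Fin (M * N)) ℂ) +
          (Matrix.diagonal db)ᴴ * Matrix.diagonal db)⁻¹ *
        (Matrix.diagonal db)ᴴ * Γ₁ᴴ) *
      (Γ₁ * Matrix.diagonal db * ((UM M N)ᴴ * P M N * UN M N)) =
        ((UM M N)ᴴ * P M N * UN M N)ᴴ *
          Matrix.diagonal (fun r : Fin (M * N) =>
            ((‖db r‖ ^ 2 / (‖db r‖ ^ 2 + ρ) : ℝ) : ℂ)) *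
          ((UM M N)ᴴ * P M N * UN M N)) ∧
    ∀ i : Fin (M * N),
      (((UM M N)ᴴ * P M N * UN M N)ᴴ *
          Matrix.diagonal (fun r : Fin (M * N) =>
            ((‖db r‖ ^ 2 / (‖db r‖ ^ 2 + ρ) : ℝ) : ℂ)) *
          ((UM M N)ᴴ * P M N * UN M N)) i i =
        (1 / ((M * N : ℕ) : ℂ)) *
          ∑ r : Fin (M * N), ((‖db r‖ ^ 2 / (‖db r‖ ^ 2 + ρ) : ℝ) : ℂ) := by
  set Γ₂ : Matrix (Fin (M * N)) (Fin (M * N)) ℂ := (UM M N)ᴴ * P M N * UN M N with hΓ₂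
  set Δ : Matrix (Fin (M * N)) (Fin (M * N)) ℂ :=
    Matrix.diagonal (fun r : Fin (M * N) =>
      ((‖db r‖ ^ 2 / (‖db r‖ ^ 2 + ρ) : ℝ) : ℂ)) with hΔ
  have hcd : ∀ r, star (db r) * db r = ((‖db r‖ ^ 2 : ℝ) : ℂ) := by
    intro r
    rw [Complex.star_def, mul_comm, Complex.mul_conj, ← Complex.sq_norm]
  constructor
  · have hρ1 : (ρ : ℂ) • (1 : Matrix (Fin (M * N)) (Fin (M * N)) ℂ)
        = Matrix.diagonal (fun _ => (ρ : ℂ)) := by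
      ext j k
      by_cases h : j = k <;> simp [Matrix.one_apply, Matrix.diagonal_apply, h]
    have hsum : (ρ : ℂ) • (1 : Matrix (Fin (M * N)) (Fin (M * N)) ℂ) +
        (Matrix.diagonal db)ᴴ * Matrix.diagonal db
        = Matrix.diagonal (fun r => (ρ : ℂ) + ((‖db r‖ ^ 2 : ℝ) : ℂ)) := by
      rw [hρ1, Matrix.diagonal_conjTranspose, Matrix.diagonal_mul_diagonal,
        Matrix.diagonal_add]
      rw [Matrix.diagonal_eq_diagonal_iff]
      intro r
      show (ρ : ℂ) + star (db r) * db r = _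
      rw [hcd r]
    have h0 : ∀ r : Fin (M * N), (ρ : ℂ) + ((‖db r‖ ^ 2 : ℝ) : ℂ) ≠ 0 := by
      intro r
      have : (ρ + ‖db r‖ ^ 2 : ℝ) ≠ 0 := by positivity
      exact_mod_cast this
    have hinv : (Matrix.diagonal (fun r => (ρ : ℂ) + ((‖db r‖ ^ 2 : ℝ) : ℂ)))⁻¹
        = Matrix.diagonal (fun r => ((ρ : ℂ) + ((‖db r‖ ^ 2 : ℝ) : ℂ))⁻¹) := by
      apply Matrix.inv_eq_right_inv
      rw [Matrix.diagonal_mul_diagonal, ← Matrix.diagonal_one, Matrix.diagonal_eq_diagonal_iff]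
      intro r
      exact mul_inv_cancel₀ (h0 r)
    have key : (Matrix.diagonal (fun r => ((ρ : ℂ) + ((‖db r‖ ^ 2 : ℝ) : ℂ))⁻¹)) *
        ((Matrix.diagonal db)ᴴ * Matrix.diagonal db) = Δ := by
      rw [Matrix.diagonal_conjTranspose, Matrix.diagonal_mul_diagonal,
        Matrix.diagonal_mul_diagonal, hΔ]
      rw [Matrix.diagonal_eq_diagonal_iff]
      intro r
      show ((ρ : ℂ) + ((‖db r‖ ^ 2 : ℝ) : ℂ))⁻¹ * (star (db r) * db r) = _
      rw [hcd r, Complex.ofReal_div]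
      have h1 : ((‖db r‖ ^ 2 + ρ : ℝ) : ℂ)
          = (ρ : ℂ) + ((‖db r‖ ^ 2 : ℝ) : ℂ) := by push_cast; ring
      rw [h1]
      field_simp
    have h1 : Γ₁ᴴ * Γ₁ = 1 := by
      rw [← Matrix.star_eq_conjTranspose]
      exact (Unitary.mem_iff.mp hΓ₁).1
    rw [hsum, hinv]
    simp only [Matrix.mul_assoc]
    rw [← Matrix.mul_assoc Γ₁ᴴ, h1, Matrix.one_mul,
      ← Matrix.mul_assoc (Matrix.diagonal db)ᴴ,
      ← Matrix.mul_assoc (Matrix.diagonal fun r =>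
        ((ρ : ℂ) + ((‖db r‖ ^ 2 : ℝ) : ℂ))⁻¹), key]
  · intro i
    rw [Matrix.mul_apply]
    have hterm : ∀ j : Fin (M * N), (Γ₂ᴴ * Δ) i j * Γ₂ j i
        = (((M * N : ℕ) : ℂ))⁻¹ *
          ((‖db j‖ ^ 2 / (‖db j‖ ^ 2 + ρ) : ℝ) : ℂ) := by
      intro j
      rw [hΔ, Matrix.mul_diagonal, Matrix.conjTranspose_apply, Complex.star_def]
      have hg := gamma2_conj_mul j i
      rw [← hΓ₂] at hg
      calc (starRingEnd ℂ) (Γ₂ j i) *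
            ((‖db j‖ ^ 2 / (‖db j‖ ^ 2 + ρ) : ℝ) : ℂ) * Γ₂ j i
          = ((starRingEnd ℂ) (Γ₂ j i) * Γ₂ j i) *
            ((‖db j‖ ^ 2 / (‖db j‖ ^ 2 + ρ) : ℝ) : ℂ) := by ring
        _ = _ := by rw [hg]
    rw [Finset.sum_congr rfl (fun j _ => hterm j), ← Finset.mul_sum, one_div]


end GFDM
end
end
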